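/- A real d×(d+1) matrix M is positively spanning (i.e., the signed maximal minors (-1)^i·minor(M,i), for i = 1,…,d+1, are all nonzero and of the same sign) if and only if every nonzero vector in the kernel of M has all its coordinates nonzero and of the same sign. -/

import Mathlib

/-- `minor M i` : determinant of the `d × d` matrix obtained from the `d × (d+1)`
matrix `M` by deleting the `i`-th column. -/
noncomputable def minor {d : ℕ} (M : Matrix (Fin d) (Fin (d + 1)) ℝ) (i : Fin (d + 1)) : ℝ :=
  (M.submatrix id i.succAbove).det

/-- `M` is positively spanning: all signed maximal minors `(-1)^i * minor M i`
are nonzero and have the same sign. -/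
def PositivelySpanning {d : ℕ} (M : Matrix (Fin d) (Fin (d + 1)) ℝ) : Prop :=
  (∀ i : Fin (d + 1), 0 < (-1 : ℝ) ^ (i : ℕ) * minor M i) ∨
  (∀ i : Fin (d + 1), (-1 : ℝ) ^ (i : ℕ) * minor M i < 0)

noncomputable def cof {d : ℕ} (M : Matrix (Fin d) (Fin (d + 1)) ℝ) : Fin (d+1) → ℝ :=
  fun i => (-1 : ℝ) ^ (i : ℕ) * minor M i

lemma mulVec_cof {d : ℕ} (M : Matrix (Fin d) (Fin (d + 1)) ℝ) :
    M.mulVec (cof M) = 0 := by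
  funext r
  have h0 : (Matrix.of (Fin.cons (M r) M) : Matrix (Fin (d+1)) (Fin (d+1)) ℝ).det = 0 :=
    Matrix.det_zero_of_row_eq (Fin.succ_ne_zero r).symm rfl
  rw [Matrix.det_succ_row_zero] at h0
  have hsub : ∀ j : Fin (d+1),
      (Matrix.of (Fin.cons (M r) M)).submatrix Fin.succ j.succAbove
        = M.submatrix id j.succAbove := by
    intro j; ext a b; simp [Matrix.submatrix]; rfl
  simp only [hsub] at h0
  simp only [Matrix.mulVec, dotProduct, cof, minor, Pi.zero_apply]
  rw [← h0]
  apply Finset.sum_congr rfl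
  intro j _
  simp [Matrix.of_apply, Fin.cons_zero]
  change _ = _ * M r j * _
  ring

lemma kernel_vec_of_minor_eq_zero {d : ℕ} (M : Matrix (Fin d) (Fin (d + 1)) ℝ)
    (i : Fin (d+1)) (h : minor M i = 0) :
    ∃ u : Fin (d+1) → ℝ, u ≠ 0 ∧ M.mulVec u = 0 ∧ u i = 0 := by
  obtain ⟨x, hx, hmx⟩ := (Matrix.exists_mulVec_eq_zero_iff.2 h)
  set u : Fin (d+1) → ℝ := i.insertNth 0 x with hudef
  refine ⟨u, ?_, ?_, by simp [hudef]⟩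
  · intro hu
    apply hx
    funext k
    have := congrFun hu (i.succAbove k)
    simpa [hudef] using this
  · funext r
    have : ∑ j : Fin (d+1), M r j * u j
        = M r i * u i
          + ∑ k : Fin d, M r (i.succAbove k) * u (i.succAbove k) :=
      Fin.sum_univ_succAbove (fun j => M r j * u j) i
    have h2 := congrFun hmx r
    simp only [Matrix.mulVec, dotProduct, Pi.zero_apply] at h2 ⊢
    rw [this]
    simp only [hudef, Fin.insertNth_apply_same, Fin.insertNth_apply_succAbove, mul_zero, zero_add]
    simpa [Matrix.submatrix] using h2

lemma kernel_eq_smul_cof {d : ℕ} (M : Matrix (Fin d) (Fin (d + 1)) ℝ)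
    (h0 : minor M 0 ≠ 0) (v : Fin (d+1) → ℝ) (hv : M.mulVec v = 0) :
    v = (v 0 / cof M 0) • cof M := by
  set c : ℝ := v 0 / cof M 0 with hc
  have hc0 : cof M 0 = minor M 0 := by simp [cof]
  set u : Fin (d+1) → ℝ := v - c • cof M with hu
  have hu0 : u 0 = 0 := by
    simp [hu, hc, hc0]
    field_simp
    ring
  have huk : M.mulVec u = 0 := by
    rw [hu, Matrix.mulVec_sub, hv, Matrix.mulVec_smul, mulVec_cof]
    simp
  have hxz : (fun k : Fin d => u ((0 : Fin (d+1)).succAbove k)) = 0 := by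
    by_contra hne
    have : (M.submatrix id (0 : Fin (d+1)).succAbove).det = 0 := by
      rw [← Matrix.exists_mulVec_eq_zero_iff]
      refine ⟨_, hne, ?_⟩
      funext r
      have hr := congrFun huk r
      have hsum : ∑ j : Fin (d+1), M r j * u j
          = M r 0 * u 0 + ∑ k : Fin d, M r ((0:Fin (d+1)).succAbove k) * u ((0:Fin (d+1)).succAbove k) :=
        Fin.sum_univ_succAbove (fun j => M r j * u j) 0
      simp only [Matrix.mulVec, dotProduct, Pi.zero_apply] at hr ⊢
      simp only [Matrix.submatrix_apply, id]
      rw [hsum, hu0, mul_zero, zero_add] at hr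
      exact hr
    exact h0 this
  have : u = 0 := by
    funext j
    cases j using Fin.cases with
    | zero => exact hu0
    | succ k =>
      have := congrFun hxz k
      simpa [Fin.succAbove_zero] using this
  have := sub_eq_zero.mp (by rw [← hu]; exact this)
  exact this

theorem positivelySpanning_iff_kernel {d : ℕ} (M : Matrix (Fin d) (Fin (d + 1)) ℝ) :
    PositivelySpanning M ↔
      ∀ v : Fin (d + 1) → ℝ, M.mulVec v = 0 → v ≠ 0 →
        (∀ i, 0 < v i) ∨ (∀ i, v i < 0) := by
  constructor
  · intro hps v hv hvne
    have h0 : minor M 0 ≠ 0 := by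
      rcases hps with h | h
      · have := h 0; simp at this; linarith
      · have := h 0; simp at this; linarith
    have hveq := kernel_eq_smul_cof M h0 v hv
    set c := v 0 / cof M 0 with hc
    have hcne : c ≠ 0 := by
      intro hcz
      apply hvne
      rw [hveq, hcz, zero_smul]
    rcases lt_or_gt_of_ne hcne with hneg | hpos
    · rcases hps with h | h
      · right; intro i
        rw [hveq]; simp only [Pi.smul_apply, smul_eq_mul]
        exact mul_neg_of_neg_of_pos hneg (h i)
      · left; intro i
        rw [hveq]; simp only [Pi.smul_apply, smul_eq_mul]
        exact mul_pos_of_neg_of_neg hneg (h i)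
    · rcases hps with h | h
      · left; intro i
        rw [hveq]; simp only [Pi.smul_apply, smul_eq_mul]
        exact mul_pos hpos (h i)
      · right; intro i
        rw [hveq]; simp only [Pi.smul_apply, smul_eq_mul]
        exact mul_neg_of_pos_of_neg hpos (h i)
  · intro hker
    have hminor : ∀ i, minor M i ≠ 0 := by
      intro i hi
      obtain ⟨u, hune, huk, hui⟩ := kernel_vec_of_minor_eq_zero M i hi
      rcases hker u huk hune with h | h
      · exact absurd hui (ne_of_gt (h i))
      · exact absurd hui (ne_of_lt (h i))
    have hwne : cof M ≠ 0 := by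
      intro h
      have := congrFun h 0
      simp [cof] at this
      exact hminor 0 this
    rcases hker (cof M) (mulVec_cof M) hwne with h | h
    · exact Or.inl h
    · exact Or.inr h
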